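/- For every convex body K in ℝⁿ, vol(K - K) ≤ binom(2n, n) · vol(K). -/

import Mathlib

open MeasureTheory Pointwise ENNReal

section RSAux
open intervalIntegral Real

lemma RS_beta_nat : ∀ (b a : ℕ), ∫ x in (0:ℝ)..1, x^a * (1-x)^b
    = (a.factorial * b.factorial : ℝ) / (a+b+1).factorial := by
  intro b
  induction b with
  | zero =>
    intro a
    simp only [pow_zero, mul_one, integral_pow, one_pow, Nat.factorial_succ, add_zero,
      Nat.factorial]
    rw [zero_pow (by omega)]
    push_cast
    rw [_root_.eq_div_iff (by positivity)]
    field_simp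
    norm_num
  | succ b ih =>
    intro a
    have key : ∫ x in (0:ℝ)..1, ((a+1:ℝ) * (x^a * (1-x)^(b+1)) - (b+1:ℝ) * (x^(a+1) * (1-x)^b)) = 0 := by
      have : ∀ x ∈ Set.uIcc (0:ℝ) 1, HasDerivAt (fun x : ℝ => x^(a+1) * (1-x)^(b+1))
          ((a+1:ℝ) * (x^a * (1-x)^(b+1)) - (b+1:ℝ) * (x^(a+1) * (1-x)^b)) x := by
        intro x _
        have h1 : HasDerivAt (fun x : ℝ => x^(a+1)) ((a+1:ℝ) * x^a) x := by
          simpa using (hasDerivAt_pow (a+1) x)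
        have h2 : HasDerivAt (fun x : ℝ => (1-x)^(b+1)) (-((b+1:ℝ) * (1-x)^b)) x := by
          have := ((hasDerivAt_pow (b+1) (1-x)).comp x ((hasDerivAt_id x).const_sub 1))
          simpa [Function.comp_def] using this
        have := h1.mul h2
        exact this.congr_deriv (by ring)
      rw [integral_eq_sub_of_hasDerivAt this (by apply Continuous.intervalIntegrable; continuity)]
      norm_num
    have i1 : IntervalIntegrable (fun x : ℝ => x^a * (1-x)^(b+1)) volume 0 1 := by
      apply Continuous.intervalIntegrable; continuity
    have i2 : IntervalIntegrable (fun x : ℝ => x^(a+1) * (1-x)^b) volume 0 1 := by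
      apply Continuous.intervalIntegrable; continuity
    rw [integral_sub ((i1.const_mul _)) ((i2.const_mul _)), intervalIntegral.integral_const_mul, intervalIntegral.integral_const_mul,
      sub_eq_zero, ih (a+1)] at key
    have ha1 : (a+1:ℝ) ≠ 0 := by positivity
    have e : a+1+b+1 = a+(b+1)+1 := by omega
    rw [e] at key
    have hF : ((a+(b+1)+1).factorial : ℝ) ≠ 0 := by positivity
    field_simp at key
    rw [_root_.eq_div_iff (by positivity)]
    push_cast [Nat.factorial_succ] at key ⊢
    nlinarith [key]

lemma RS_rpow_cont {n : ℕ} (hn : n ≠ 0) : Continuous fun t : ℝ => t ^ ((n:ℝ)⁻¹) := by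
  rw [continuous_iff_continuousAt]
  intro x
  exact Real.continuousAt_rpow_const x _ (Or.inr (by positivity))

lemma RS_J (n : ℕ) (hn : n ≠ 0) :
    ∫ t in (0:ℝ)..1, (1 - t ^ ((n:ℝ)⁻¹))^n
      = (n.factorial * n.factorial : ℝ) / (2*n).factorial := by
  have hφ : ∀ x ∈ Set.uIcc (0:ℝ) 1, HasDerivAt (fun s : ℝ => s ^ n) ((n:ℝ) * x ^ (n-1)) x := by
    intro x _
    simpa using hasDerivAt_pow n x
  have hcont : Continuous fun t : ℝ => (1 - t ^ ((n:ℝ)⁻¹))^n :=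
    ((continuous_const.sub (RS_rpow_cont hn)).pow n)
  have := integral_comp_smul_deriv hφ (Continuous.continuousOn (by continuity)) hcont
  simp only [one_pow, zero_pow hn, Function.comp] at this
  rw [← this]
  have congr1 : ∀ x ∈ Set.uIcc (0:ℝ) 1,
      ((n:ℝ) * x ^ (n-1)) • (1 - (x ^ n : ℝ) ^ ((n:ℝ)⁻¹))^n
        = (n:ℝ) * (x^(n-1) * (1-x)^n) := by
    intro x hx
    rw [Set.uIcc_of_le (by norm_num)] at hx
    rw [← Real.rpow_natCast x n, ← Real.rpow_mul hx.1, mul_inv_cancel₀ (by positivity : (n:ℝ) ≠ 0),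
      Real.rpow_one]
    simp [smul_eq_mul]; ring
  rw [integral_congr congr1, intervalIntegral.integral_const_mul, RS_beta_nat n (n-1)]
  have e : n - 1 + n + 1 = 2 * n := by omega
  rw [e]
  have : (n.factorial : ℝ) = n * (n-1).factorial := by
    conv_lhs => rw [show n = (n-1)+1 by omega]
    push_cast [Nat.factorial_succ]
    congr 1
    push_cast [Nat.cast_sub (by omega : 1 ≤ n)]
    ring
  rw [this]
  ring

lemma RS_gauge_repr {E : Type*} [NormedAddCommGroup E] [NormedSpace ℝ E]
    {D : Set E} (hDconv : Convex ℝ D) (hDcl : IsClosed D) (hDbd : Bornology.IsBounded D)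
    (hD0 : D ∈ nhds (0:E)) {z : E} (hz : z ∈ D) :
    ∃ w ∈ D, z = gauge D z • w := by
  have habs : Absorbent ℝ D := absorbent_nhds_zero hD0
  have h0D : (0:E) ∈ D := mem_of_mem_nhds hD0
  have hmem : ∀ r : ℝ, gauge D z < r → r ≤ 1 → r⁻¹ • z ∈ D := by
    intro r hr hr1
    obtain ⟨b, hb0, hbr, w, hw, rfl⟩ := exists_lt_of_gauge_lt habs hr
    have hrpos : 0 < r := hb0.trans hbr
    rw [smul_smul]
    refine hDconv.smul_mem_of_zero_mem h0D hw ⟨by positivity, ?_⟩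
    calc r⁻¹ * b = b / r := by ring
      _ ≤ 1 := (div_le_one hrpos).2 hbr.le
  rcases eq_or_lt_of_le (gauge_nonneg z : 0 ≤ gauge D z) with h0 | hpos
  · -- gauge = 0 : z = 0
    refine ⟨0, h0D, ?_⟩
    obtain ⟨C, hC⟩ := hDbd.subset_closedBall 0
    have hz0 : z = 0 := by
      by_contra hne
      have hnorm : 0 < ‖z‖ := norm_pos_iff.2 hne
      obtain ⟨k, hk⟩ := exists_nat_gt (C / ‖z‖)
      have hk0 : (0:ℝ) < (k:ℝ)+1 := by positivity
      have hmemk : (((k:ℝ)+1)⁻¹)⁻¹ • z ∈ D := by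
        rw [inv_inv]
        have := hmem (((k:ℝ)+1)⁻¹) (by rw [← h0]; positivity) (by
          rw [inv_le_one_iff₀]; right; linarith)
        rwa [inv_inv] at this
      have hball := hC hmemk
      rw [Metric.mem_closedBall, dist_zero_right, norm_smul] at hball
      simp only [inv_inv, Real.norm_eq_abs, abs_of_pos hk0] at hball
      have h1 : C / ‖z‖ < (k:ℝ) + 1 := by linarith
      rw [div_lt_iff₀ hnorm] at h1
      nlinarith
    simp [hz0]
  · rcases eq_or_lt_of_le (gauge_le_one_of_mem hz) with h1 | h1
    · exact ⟨z, hz, by rw [h1, one_smul]⟩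
    · refine ⟨(gauge D z)⁻¹ • z, ?_, by rw [smul_smul, mul_inv_cancel₀ hpos.ne', one_smul]⟩
      set t := gauge D z with ht
      have hevent : ∀ᶠ r in nhdsWithin t (Set.Ioi t), r⁻¹ • z ∈ D := by
        filter_upwards [Ioc_mem_nhdsGT_of_mem (Set.mem_Ico.2 ⟨le_refl t, h1⟩)] with r hr
        exact hmem r hr.1 hr.2
      have htend : Filter.Tendsto (fun r : ℝ => r⁻¹ • z) (nhdsWithin t (Set.Ioi t))
          (nhds (t⁻¹ • z)) :=
        (((continuousAt_inv₀ hpos.ne').smul continuousAt_const).tendsto).mono_left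
          nhdsWithin_le_nhds
      exact hDcl.mem_of_tendsto htend hevent

private theorem RS_main (n : ℕ) (K : Set (EuclideanSpace ℝ (Fin n)))
    (hK : IsCompact K) (hconv : Convex ℝ K) (hint : (interior K).Nonempty)
    (hn : 0 < n) :
    volume (K - K) ≤ (Nat.choose (2 * n) n : ℝ≥0∞) * volume K := by
  set D : Set (EuclideanSpace ℝ (Fin n)) := K - K with hD
  have hKm : MeasurableSet K := hK.measurableSet
  have hDcomp : IsCompact D := by rw [hD, sub_eq_add_neg]; exact hK.add hK.neg
  have hDconv : Convex ℝ D := hconv.sub hconv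
  have hDcl : IsClosed D := hDcomp.isClosed
  have hDm : MeasurableSet D := hDcl.measurableSet
  obtain ⟨x₀, hx₀⟩ := hint
  have hD0 : D ∈ nhds (0 : EuclideanSpace ℝ (Fin n)) := by
    refine Filter.mem_of_superset
      (((isOpen_interior.preimage (continuous_id.add continuous_const)) :
        IsOpen ((fun y : EuclideanSpace ℝ (Fin n) => y + x₀) ⁻¹' interior K)).mem_nhds (by simpa using hx₀)) ?_
    intro y hy
    exact ⟨y + x₀, interior_subset hy, x₀, interior_subset hx₀, by simp⟩
  have hμK0 : volume K ≠ 0 :=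
    (lt_of_lt_of_le (isOpen_interior.measure_pos _ ⟨x₀, hx₀⟩) (measure_mono interior_subset)).ne'
  have hμKtop : volume K ≠ ⊤ := hK.measure_lt_top.ne
  -- Step A : Fubini
  have hind1 : Measurable (K.indicator (1 : EuclideanSpace ℝ (Fin n) → ℝ≥0∞)) :=
    measurable_const.indicator hKm
  have hfmeas : Measurable fun p : EuclideanSpace ℝ (Fin n) × EuclideanSpace ℝ (Fin n) => K.indicator (1 : EuclideanSpace ℝ (Fin n) → ℝ≥0∞) p.2
      * K.indicator (1 : EuclideanSpace ℝ (Fin n) → ℝ≥0∞) (p.2 - p.1) := by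
    exact ((measurable_const.indicator hKm).comp measurable_snd).mul
      ((measurable_const.indicator hKm).comp (measurable_snd.sub measurable_fst))
  have find : ∀ z : EuclideanSpace ℝ (Fin n), volume (K ∩ {y | y - z ∈ K})
      = ∫⁻ y, K.indicator 1 y * K.indicator 1 (y - z) := by
    intro z
    have hset : MeasurableSet (K ∩ {y : EuclideanSpace ℝ (Fin n) | y - z ∈ K}) :=
      hKm.inter ((measurable_id.sub measurable_const) hKm)
    rw [← lintegral_indicator_one hset]
    congr 1; funext y
    by_cases h1 : y ∈ K <;> by_cases h2 : y - z ∈ K <;>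
      simp [Set.indicator, h1, h2, Set.mem_setOf_eq]
  have stepA : volume K * volume K = ∫⁻ z, volume (K ∩ {y | y - z ∈ K}) := by
    simp_rw [find]
    rw [lintegral_lintegral_swap hfmeas.aemeasurable]
    have inner : ∀ y : EuclideanSpace ℝ (Fin n), ∫⁻ z, K.indicator (1 : EuclideanSpace ℝ (Fin n) → ℝ≥0∞) y * K.indicator 1 (y - z)
        = K.indicator 1 y * volume K := by
      intro y
      have hg : Measurable fun z : EuclideanSpace ℝ (Fin n) => K.indicator (1 : EuclideanSpace ℝ (Fin n) → ℝ≥0∞) (y - z) :=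
        (measurable_const.indicator hKm).comp (measurable_const.sub measurable_id)
      rw [lintegral_const_mul _ hg]
      congr 1
      rw [(Measure.measurePreserving_sub_left volume y).lintegral_comp hind1]
      exact lintegral_indicator_one hKm
    simp_rw [inner]
    have hind : Measurable (K.indicator (1 : EuclideanSpace ℝ (Fin n) → ℝ≥0∞)) :=
      measurable_const.indicator hKm
    rw [lintegral_mul_const _ hind, lintegral_indicator_one hKm, mul_comm]
  -- Step B : pointwise lower bound
  have stepB : ∀ z ∈ D, ENNReal.ofReal ((1 - gauge D z)^n) * volume K
      ≤ volume (K ∩ {y | y - z ∈ K}) := by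
    intro z hz
    obtain ⟨w, hw, hzw⟩ := RS_gauge_repr hDconv hDcl hDcomp.isBounded hD0 hz
    obtain ⟨a, ha, b, hb, hab⟩ := hw
    set t := gauge D z with htdef
    have ht0 : 0 ≤ t := gauge_nonneg z
    have ht1 : t ≤ 1 := gauge_le_one_of_mem hz
    have hsub : (t • a) +ᵥ ((1-t) • K) ⊆ K ∩ {y | y - z ∈ K} := by
      rintro u hu
      obtain ⟨v, ⟨y, hy, rfl⟩, rfl⟩ := hu
      constructor
      · have := hconv ha hy ht0 (by linarith : (0:ℝ) ≤ 1 - t) (by ring)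
        simpa [vadd_eq_add] using this
      · have hzab : z = t • a - t • b := by rw [hzw, ← hab, smul_sub]
        have : (t • a +ᵥ (1-t) • y) - z = (1-t) • y + t • b := by
          rw [hzab, vadd_eq_add]; abel
        rw [Set.mem_setOf_eq, this]
        have := hconv hy hb (by linarith : (0:ℝ) ≤ 1 - t) ht0 (by ring)
        simpa using this
    calc ENNReal.ofReal ((1-t)^n) * volume K
        = volume ((t • a) +ᵥ ((1-t) • K)) := by
          rw [measure_vadd, Measure.addHaar_smul, finrank_euclideanSpace_fin,
            abs_of_nonneg (pow_nonneg (by linarith) n)]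
      _ ≤ volume (K ∩ {y | y - z ∈ K}) := measure_mono hsub
  -- Step C : layer cake
  have hn' : n ≠ 0 := hn.ne'
  have h0D : (0 : EuclideanSpace ℝ (Fin n)) ∈ D := mem_of_mem_nhds hD0
  have hgc : Continuous fun z : EuclideanSpace ℝ (Fin n) => (1 - gauge D z)^n :=
    (continuous_const.sub (continuous_gauge hDconv hD0)).pow n
  have hμDint : volume (interior D) = volume D := by
    refine le_antisymm (measure_mono interior_subset) ?_
    calc volume D ≤ volume (interior D ∪ frontier D) := measure_mono (by
          rw [← closure_eq_interior_union_frontier]; exact subset_closure)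
      _ ≤ volume (interior D) + volume (frontier D) := measure_union_le _ _
      _ = volume (interior D) := by rw [hDconv.addHaar_frontier volume, add_zero]
  set J : ℝ := (n.factorial * n.factorial : ℝ) / (2*n).factorial with hJdef
  have hJnn : 0 ≤ J := by positivity
  have stepC : ENNReal.ofReal J * volume D
      ≤ ∫⁻ z in D, ENNReal.ofReal ((1 - gauge D z)^n) := by
    rw [lintegral_eq_lintegral_meas_lt _
      ((ae_restrict_iff' hDm).2 (Filter.Eventually.of_forall (fun z hz =>
        pow_nonneg (by linarith [gauge_le_one_of_mem hz]) n)))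
      hgc.aemeasurable.restrict]
    have key : ∀ t ∈ Set.Ioo (0:ℝ) 1,
        ENNReal.ofReal ((1 - t ^ ((n:ℝ)⁻¹))^n) * volume D
          ≤ (volume.restrict D) {z | t < (1 - gauge D z)^n} := by
      intro t ht
      set c : ℝ := 1 - t ^ ((n:ℝ)⁻¹) with hcdef
      have htr0 : 0 < t ^ ((n:ℝ)⁻¹) := Real.rpow_pos_of_pos ht.1 _
      have htr1 : t ^ ((n:ℝ)⁻¹) < 1 :=
        Real.rpow_lt_one ht.1.le ht.2 (by positivity)
      have hc0 : 0 ≤ c := by simp only [hcdef]; linarith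
      have hc1 : c ≤ 1 := by simp only [hcdef]; linarith
      have hincl : c • interior D ⊆ {z | t < (1 - gauge D z)^n} ∩ D := by
        rintro _ ⟨w, hw, rfl⟩
        have hgw : gauge D w < 1 := interior_subset_gauge_lt_one D hw
        have hgcw : gauge D (c • w) = c * gauge D w := by
          rw [gauge_smul_of_nonneg hc0, smul_eq_mul]
        constructor
        · have h1 : gauge D (c • w) < c := by
            have hcpos : 0 < c := by simp only [hcdef]; linarith
            rw [hgcw]
            exact mul_lt_of_lt_one_right hcpos hgw
          have h2 : t ^ ((n:ℝ)⁻¹) < 1 - gauge D (c • w) := by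
            simp only [hcdef] at h1; linarith
          have h3 : (t ^ ((n:ℝ)⁻¹))^n < (1 - gauge D (c • w))^n :=
            pow_lt_pow_left₀ h2 htr0.le hn'
          have h4 : (t ^ ((n:ℝ)⁻¹))^n = t := by
            rw [← Real.rpow_natCast (t ^ ((n:ℝ)⁻¹)) n, ← Real.rpow_mul ht.1.le,
              inv_mul_cancel₀ (by positivity : (n:ℝ) ≠ 0), Real.rpow_one]
          rw [Set.mem_setOf_eq, ← h4]
          exact h3
        · exact hDconv.smul_mem_of_zero_mem h0D (interior_subset hw) ⟨hc0, hc1⟩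
      have hopen : MeasurableSet {z : EuclideanSpace ℝ (Fin n) | t < (1 - gauge D z)^n} :=
        (isOpen_lt continuous_const hgc).measurableSet
      rw [Measure.restrict_apply hopen]
      calc ENNReal.ofReal (c^n) * volume D = volume (c • interior D) := by
            rw [Measure.addHaar_smul, finrank_euclideanSpace_fin,
              abs_of_nonneg (pow_nonneg hc0 n), hμDint]
        _ ≤ volume ({z | t < (1 - gauge D z)^n} ∩ D) := measure_mono hincl
    calc ENNReal.ofReal J * volume D
        = (∫⁻ t in Set.Ioo (0:ℝ) 1, ENNReal.ofReal ((1 - t ^ ((n:ℝ)⁻¹))^n)) * volume D := by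
          congr 1
          have hcont : Continuous fun t : ℝ => (1 - t ^ ((n:ℝ)⁻¹))^n :=
            (continuous_const.sub (RS_rpow_cont hn')).pow n
          have hInt : IntegrableOn (fun t : ℝ => (1 - t ^ ((n:ℝ)⁻¹))^n) (Set.Ioo 0 1) volume :=
            (hcont.integrableOn_Icc (a := 0) (b := 1)).mono_set Set.Ioo_subset_Icc_self
          rw [← MeasureTheory.ofReal_integral_eq_lintegral_ofReal hInt
            ((ae_restrict_iff' measurableSet_Ioo).2 (Filter.Eventually.of_forall (fun t ht => by
              have : t ^ ((n:ℝ)⁻¹) ≤ 1 := (Real.rpow_le_one ht.1.le ht.2.le (by positivity))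
              exact pow_nonneg (by linarith) n)))]
          congr 1
          rw [← MeasureTheory.integral_Ioc_eq_integral_Ioo,
            ← intervalIntegral.integral_of_le (by norm_num : (0:ℝ) ≤ 1)]
          exact (RS_J n hn').symm
      _ = ∫⁻ t in Set.Ioo (0:ℝ) 1, ENNReal.ofReal ((1 - t ^ ((n:ℝ)⁻¹))^n) * volume D := by
          have hm : Measurable fun t : ℝ => ENNReal.ofReal ((1 - t ^ ((n:ℝ)⁻¹))^n) :=
            ENNReal.measurable_ofReal.comp
              ((continuous_const.sub (RS_rpow_cont hn')).pow n).measurable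
          rw [lintegral_mul_const _ hm]
      _ ≤ ∫⁻ t in Set.Ioo (0:ℝ) 1, (volume.restrict D) {z | t < (1 - gauge D z)^n} := by
          refine lintegral_mono_ae ((ae_restrict_iff' measurableSet_Ioo).2
            (Filter.Eventually.of_forall key))
      _ ≤ ∫⁻ t in Set.Ioi (0:ℝ), (volume.restrict D) {z | t < (1 - gauge D z)^n} :=
          lintegral_mono_set (Set.Ioo_subset_Ioi_self)
  -- Assemble
  have chain : ENNReal.ofReal J * volume D * volume K ≤ volume K * volume K := by
    calc ENNReal.ofReal J * volume D * volume K
        ≤ (∫⁻ z in D, ENNReal.ofReal ((1 - gauge D z)^n)) * volume K :=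
          mul_le_mul_left stepC _
      _ = ∫⁻ z in D, ENNReal.ofReal ((1 - gauge D z)^n) * volume K := by
          have hm2 : Measurable fun z : EuclideanSpace ℝ (Fin n) =>
              ENNReal.ofReal ((1 - gauge D z)^n) :=
            ENNReal.measurable_ofReal.comp hgc.measurable
          rw [lintegral_mul_const _ hm2]
      _ ≤ ∫⁻ z in D, volume (K ∩ {y | y - z ∈ K}) :=
          lintegral_mono_ae ((ae_restrict_iff' hDm).2 (Filter.Eventually.of_forall stepB))
      _ ≤ ∫⁻ z, volume (K ∩ {y | y - z ∈ K}) := setLIntegral_le_lintegral _ _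
      _ = volume K * volume K := stepA.symm
  have hcancel : ENNReal.ofReal J * volume D ≤ volume K :=
    (ENNReal.mul_le_mul_iff_left hμK0 hμKtop).1 chain
  have hJchoose : (Nat.choose (2*n) n : ℝ≥0∞) * ENNReal.ofReal J = 1 := by
    rw [← ENNReal.ofReal_natCast, ← ENNReal.ofReal_mul (by positivity)]
    rw [show ((Nat.choose (2*n) n : ℝ)) * J = 1 from ?_, ENNReal.ofReal_one]
    have hfact : (Nat.choose (2*n) n) * n.factorial * n.factorial = (2*n).factorial := by
      have := Nat.choose_mul_factorial_mul_factorial (by omega : n ≤ 2*n)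
      simpa [show 2*n - n = n by omega] using this
    rw [hJdef, mul_div_assoc']
    rw [div_eq_one_iff_eq (by positivity)]
    push_cast [← hfact]
    ring
  calc volume D = (Nat.choose (2*n) n : ℝ≥0∞) * ENNReal.ofReal J * volume D := by
        rw [hJchoose, one_mul]
    _ = (Nat.choose (2*n) n : ℝ≥0∞) * (ENNReal.ofReal J * volume D) := by rw [mul_assoc]
    _ ≤ (Nat.choose (2*n) n : ℝ≥0∞) * volume K := mul_le_mul_right hcancel _
end RSAux

theorem stmt6 (n : ℕ) (K : Set (EuclideanSpace ℝ (Fin n)))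
    (hK : IsCompact K) (hconv : Convex ℝ K) (hint : (interior K).Nonempty) :
    volume (K - K) ≤ (Nat.choose (2 * n) n : ℝ≥0∞) * volume K := by
  rcases Nat.eq_zero_or_pos n with hn | hn
  · subst hn
    have hKne : K.Nonempty := hint.mono interior_subset
    have h1 : K = Set.univ := hKne.eq_univ
    have h2 : K - K = Set.univ := by
      rw [h1]
      exact (Set.univ_nonempty.sub Set.univ_nonempty :
        (Set.univ - Set.univ : Set _).Nonempty).eq_univ
    simp [h1, h2]
  · exact RS_main n K hK hconv hint hn
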